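/- Let G be a finite simple graph. Then the characteristic polynomial of the adjacency matrix of the line graph L(G) divides the characteristic polynomial of the adjacency matrix of the symmetric lift HL'₂(G), and the characteristic polynomial of the Laplacian matrix of L(G) divides the characteristic polynomial of the Laplacian matrix of HL'₂(G). In particular, every adjacency (respectively Laplacian) eigenvalue of L(G) is, with at least its multiplicity, an adjacency (respectively Laplacian) eigenvalue of HL'₂(G). -/

import Mathlib

open Matrix Polynomial

section Blocks
variable {R : Type*} [CommRing R] {n : Type*} [DecidableEq n] [Fintype n]

lemma det_fromBlocks_symm (P Q : Matrix n n R) :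
    (fromBlocks P Q Q P).det = (P + Q).det * (P - Q).det := by
  have h : fromBlocks (1 : Matrix n n R) 0 (-1) 1 * fromBlocks P Q Q P *
      fromBlocks (1 : Matrix n n R) 0 1 1 = fromBlocks (P + Q) Q 0 (P - Q) := by
    simp only [Matrix.fromBlocks_multiply, Matrix.one_mul, Matrix.mul_one, Matrix.zero_mul,
      Matrix.mul_zero, Matrix.neg_mul]
    rw [show P + 0 + (Q + 0) = P + Q by abel,
      show (-P : Matrix n n R) + Q + (-Q + P) = 0 by abel,
      show (0 : Matrix n n R) + (-Q + P) = P - Q by abel,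
      show (0 : Matrix n n R) + (Q + 0) = Q by abel]
  have h2 : (fromBlocks P Q Q P).det = (fromBlocks (P + Q) Q 0 (P - Q)).det := by
    rw [← h]
    simp [Matrix.det_mul, Matrix.det_fromBlocks_zero₁₂, Matrix.det_fromBlocks_zero₂₁]
  rw [h2, Matrix.det_fromBlocks_zero₂₁]

lemma charpoly_fromBlocks_symm (X Y : Matrix n n R) :
    (fromBlocks X Y Y X).charpoly = (X + Y).charpoly * (X - Y).charpoly := by
  unfold Matrix.charpoly
  rw [Matrix.charmatrix_fromBlocks, det_fromBlocks_symm]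
  congr 2
  · ext i j
    by_cases hij : i = j <;>
      simp [Matrix.charmatrix_apply, Matrix.diagonal_apply, hij, Matrix.map_apply] <;> ring
  · ext i j
    by_cases hij : i = j <;>
      simp [Matrix.charmatrix_apply, Matrix.diagonal_apply, hij, Matrix.map_apply] <;> ring

end Blocks


open SimpleGraph

/-- The symmetric lift `HL'₂(G)`: vertices are ordered pairs `(u,v)` with `{u,v}` an edge of `G`;
distinct vertices `(u,v)` and `(x,y)` are adjacent iff `u = x` or `v = y`. -/
def symLift {V : Type*} (G : SimpleGraph V) : SimpleGraph {p : V × V // G.Adj p.1 p.2} where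
  Adj a b := a ≠ b ∧ (a.val.1 = b.val.1 ∨ a.val.2 = b.val.2)
  symm := ⟨fun _ _ h => ⟨h.1.symm, h.2.imp Eq.symm Eq.symm⟩⟩
  loopless := ⟨fun _ h => h.1 rfl⟩
lemma adj_row_sum {α : Type*} [Fintype α] (H : SimpleGraph α) [DecidableRel H.Adj] (v : α) :
    ∑ w, H.adjMatrix ℤ v w = (H.degree v : ℤ) := by
  simp [SimpleGraph.adjMatrix_apply, SimpleGraph.degree, SimpleGraph.neighborFinset_eq_filter,
    Finset.sum_boole]

open scoped Classical in
/-- The characteristic polynomial of the adjacency (resp. Laplacian) matrix of the line graph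
divides the characteristic polynomial of the adjacency (resp. Laplacian) matrix of the
symmetric lift; in particular every adjacency (resp. Laplacian) eigenvalue of `L(G)` occurs,
with at least its multiplicity, as an eigenvalue of `HL'₂(G)`. -/

theorem stmt_13 {V : Type*} [Fintype V] (G : SimpleGraph V) :
    (G.lineGraph.adjMatrix ℤ).charpoly ∣ ((symLift G).adjMatrix ℤ).charpoly ∧
    (G.lineGraph.lapMatrix ℤ).charpoly ∣ ((symLift G).lapMatrix ℤ).charpoly := by
  set W := {p : V × V // G.Adj p.1 p.2} with hW
  set S := symLift G with hS
  -- the flip involution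
  let σ : W → W := fun p => ⟨(p.1.2, p.1.1), p.2.symm⟩
  have hσσ : ∀ w : W, σ (σ w) = w := fun w => rfl
  have hσne : ∀ w : W, σ w ≠ w := by
    intro w h
    exact (G.ne_of_adj w.2).symm (congrArg (fun x => x.1.1) h)
  -- the projection to edges
  let π : W → G.edgeSet := fun p => ⟨s(p.1.1, p.1.2), G.mem_edgeSet.mpr p.2⟩
  have hπσ : ∀ w : W, π (σ w) = π w := fun w => Subtype.ext Sym2.eq_swap
  -- fibers of π
  have hfiber : ∀ a b : W, π a = π b → a = b ∨ a = σ b := by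
    intro a b hab
    have h := congrArg Subtype.val hab
    rcases Sym2.mk_eq_mk_iff.mp h with h' | h'
    · left; exact Subtype.ext (by rw [← Prod.mk.eta (p := a.1), ← Prod.mk.eta (p := b.1)]; exact h')
    · right; exact Subtype.ext (by
        rw [← Prod.mk.eta (p := a.1)]
        exact h')
  -- a section of π
  have hex : ∀ e : G.edgeSet, ∃ w : W, π w = e := by
    rintro ⟨e, he⟩
    induction e using Sym2.ind with
    | _ u v => exact ⟨⟨(u, v), G.mem_edgeSet.mp he⟩, rfl⟩
  choose r hr using hex
  have hrinj : Function.Injective r := fun e f h => by rw [← hr e, ← hr f, h]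
  have hσinj : Function.Injective σ := fun a b h => by rw [← hσσ a, h, hσσ b]
  have hadj_def : ∀ a b : W, S.Adj a b ↔ (a ≠ b ∧ ((a : V × V).1 = (b : V × V).1 ∨ (a : V × V).2 = (b : V × V).2)) := fun a b => Iff.rfl
  have hadjσ : ∀ a b : W, S.Adj (σ a) (σ b) ↔ S.Adj a b := by
    intro a b
    rw [hadj_def, hadj_def]
    constructor
    · rintro ⟨hne, hor⟩
      exact ⟨fun h => hne (congrArg σ h), hor.symm⟩
    · rintro ⟨hne, hor⟩
      exact ⟨fun h => hne (hσinj h), hor.symm⟩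
  have hvne : ∀ w : W, (w : V × V).1 ≠ (w : V × V).2 := fun w => G.ne_of_adj w.2
  -- never adjacent to both an element and its flip
  have hnotboth : ∀ a b : W, S.Adj a b → S.Adj a (σ b) → False := by
    intro a b h1 h2
    rw [hadj_def] at h1 h2
    rcases h1.2 with h | h <;> rcases h2.2 with h' | h'
    · exact hvne b (h.symm.trans h')
    · exact hvne a (h.trans h'.symm)
    · exact hvne a (h'.trans h.symm)
    · exact hvne b (h'.symm.trans h)
  -- line graph adjacency corresponds to adjacency with one of the two lifts
  have hline : ∀ a b : W, G.lineGraph.Adj (π a) (π b) ↔ (S.Adj a b ∨ S.Adj a (σ b)) := by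
    intro a b
    rw [lineGraph_adj_iff_exists]
    constructor
    · rintro ⟨hne, v, hva, hvb⟩
      simp only [π, Sym2.mem_iff] at hva hvb
      have hab : a ≠ b := fun h => hne (congrArg π h)
      have haσb : a ≠ σ b := fun h => hne ((congrArg π h).trans (hπσ b))
      rcases hva with rfl | rfl <;> rcases hvb with h | h
      · exact Or.inl ((hadj_def a b).mpr ⟨hab, Or.inl h⟩)
      · exact Or.inr ((hadj_def a (σ b)).mpr ⟨haσb, Or.inl h⟩)
      · exact Or.inr ((hadj_def a (σ b)).mpr ⟨haσb, Or.inr h⟩)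
      · exact Or.inl ((hadj_def a b).mpr ⟨hab, Or.inr h⟩)
    · intro h
      have hπne : π a ≠ π b := by
        intro hpi
        rcases hfiber a b hpi with rfl | rfl
        · rcases h with h | h
          · exact ((hadj_def a a).mp h).1 rfl
          · rcases ((hadj_def a (σ a)).mp h).2 with h' | h'
            · exact hvne a h'
            · exact hvne a h'.symm
        · rcases h with h | h
          · rcases ((hadj_def (σ b) b).mp h).2 with h' | h'
            · exact hvne b h'.symm
            · exact hvne b h'
          · exact ((hadj_def (σ b) (σ b)).mp h).1 rfl
      refine ⟨hπne, ?_⟩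
      rcases h with h | h
      · rcases ((hadj_def a b).mp h).2 with h' | h'
        · exact ⟨(a : V × V).1, Sym2.mem_mk_left _ _, Sym2.mem_iff.mpr (Or.inl h')⟩
        · exact ⟨(a : V × V).2, Sym2.mem_mk_right _ _, Sym2.mem_iff.mpr (Or.inr h')⟩
      · rcases ((hadj_def a (σ b)).mp h).2 with h' | h'
        · exact ⟨(a : V × V).1, Sym2.mem_mk_left _ _, Sym2.mem_iff.mpr (Or.inr h')⟩
        · exact ⟨(a : V × V).2, Sym2.mem_mk_right _ _, Sym2.mem_iff.mpr (Or.inl h')⟩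
  have hrne : ∀ e f, r e ≠ σ (r f) := by
    intro e f h
    have hef : e = f := by rw [← hr e, ← hr f, h, hπσ]
    subst hef; exact hσne (r e) h.symm
  -- the bijection between two copies of the edge set and W
  let F : G.edgeSet ⊕ G.edgeSet → W := Sum.elim r (fun e => σ (r e))
  have hFbij : Function.Bijective F := by
    constructor
    · rintro (e | e) (f | f) h
      · exact congrArg Sum.inl (hrinj h)
      · exact (hrne e f h).elim
      · exact (hrne f e h.symm).elim
      · exact congrArg Sum.inr (hrinj (hσinj h))
    · intro w
      rcases hfiber w (r (π w)) (by rw [hr]) with h | h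
      · exact ⟨Sum.inl (π w), h.symm⟩
      · exact ⟨Sum.inr (π w), h.symm⟩
  let ε : G.edgeSet ⊕ G.edgeSet ≃ W := Equiv.ofBijective F hFbij
  have hchar : ∀ M : Matrix W W ℤ, (M.submatrix F F).charpoly = M.charpoly := by
    intro M
    have hmm : M.submatrix F F = (Matrix.reindex ε.symm ε.symm) M := rfl
    rw [hmm, Matrix.charpoly_reindex]
  -- the adjacency matrix blocks
  set A : Matrix W W ℤ := S.adjMatrix ℤ with hA
  let Xm : Matrix G.edgeSet G.edgeSet ℤ := Matrix.of fun e f => A (r e) (r f)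
  let Ym : Matrix G.edgeSet G.edgeSet ℤ := Matrix.of fun e f => A (r e) (σ (r f))
  have hAσσ : ∀ a b : W, A (σ a) (σ b) = A a b := by
    intro a b; simp only [A, adjMatrix_apply, hadjσ]
  have hAσ : ∀ a b : W, A (σ a) b = A a (σ b) := by
    intro a b; rw [← hAσσ a (σ b), hσσ]
  have hsubA : A.submatrix F F = Matrix.fromBlocks Xm Ym Ym Xm := by
    ext i j
    rcases i with e | e <;> rcases j with f | f
    · rfl
    · rfl
    · exact hAσ (r e) (r f)
    · exact hAσσ (r e) (r f)
  have hXY : Xm + Ym = G.lineGraph.adjMatrix ℤ := by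
    ext e f
    have hl := hline (r e) (r f)
    rw [hr, hr] at hl
    by_cases h1 : S.Adj (r e) (r f) <;> by_cases h2 : S.Adj (r e) (σ (r f))
    · exact (hnotboth _ _ h1 h2).elim
    · simp [Xm, Ym, A, adjMatrix_apply, Matrix.add_apply, h1, h2, hl.mpr (Or.inl h1)]
    · simp [Xm, Ym, A, adjMatrix_apply, Matrix.add_apply, h1, h2, hl.mpr (Or.inr h2)]
    · have hna : ¬ G.lineGraph.Adj e f := fun h => (hl.mp h).elim h1 h2
      simp [Xm, Ym, A, adjMatrix_apply, Matrix.add_apply, h1, h2, hna]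
  -- degrees
  have hrowA : ∀ v : W, ∑ w, A v w = (S.degree v : ℤ) := fun v => adj_row_sum S v
  have hinv : Function.Involutive σ := hσσ
  have hdegσ : ∀ w : W, (S.degree (σ w) : ℤ) = (S.degree w : ℤ) := by
    intro w
    rw [← hrowA, ← hrowA, ← Equiv.sum_comp hinv.toPerm (fun u => A (σ w) u)]
    exact Finset.sum_congr rfl fun u _ => hAσσ w u
  have hdeg : ∀ e, (S.degree (r e) : ℤ) = (G.lineGraph.degree e : ℤ) := by
    intro e
    rw [← hrowA, ← adj_row_sum G.lineGraph e, ← Equiv.sum_comp ε (fun w => A (r e) w),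
      Fintype.sum_sum_type, ← Finset.sum_add_distrib]
    exact Finset.sum_congr rfl fun f _ => by rw [← hXY]; rfl
  -- the Laplacian blocks
  let D : Matrix G.edgeSet G.edgeSet ℤ := Matrix.diagonal fun e => (G.lineGraph.degree e : ℤ)
  set L : Matrix W W ℤ := S.lapMatrix ℤ with hLdef'
  have hLdef : ∀ a b : W, L a b = (if a = b then (S.degree a : ℤ) else 0) - A a b := by
    intro a b
    simp [hLdef', lapMatrix, degMatrix, Matrix.sub_apply, Matrix.diagonal_apply, hA]
  have hsubL : L.submatrix F F = Matrix.fromBlocks (D - Xm) (-Ym) (-Ym) (D - Xm) := by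
    ext i j
    rcases i with e | e <;> rcases j with f | f
    · show L (r e) (r f) = (D - Xm) e f
      rw [hLdef, Matrix.sub_apply]
      congr 1
      by_cases h : e = f
      · subst h; rw [if_pos rfl, hdeg]; simp [D]
      · rw [if_neg (fun hh => h (hrinj hh))]; simp [D, Matrix.diagonal_apply_ne _ h]
    · show L (r e) (σ (r f)) = -Ym e f
      rw [hLdef, if_neg (hrne e f), zero_sub]
      rfl
    · show L (σ (r e)) (r f) = -Ym e f
      rw [hLdef, if_neg (fun hh => hrne f e hh.symm), zero_sub, hAσ]
      rfl
    · show L (σ (r e)) (σ (r f)) = (D - Xm) e f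
      rw [hLdef, Matrix.sub_apply, hAσσ]
      congr 1
      by_cases h : e = f
      · subst h; rw [if_pos rfl, hdegσ, hdeg]; simp [D]
      · rw [if_neg (fun hh => h (hrinj (hσinj hh)))]; simp [D, Matrix.diagonal_apply_ne _ h]
  have hXY' : (D - Xm) + (-Ym) = G.lineGraph.lapMatrix ℤ := by
    have h0 : (D - Xm) + (-Ym) = D - (Xm + Ym) := by abel
    rw [h0, hXY]
    rfl
  constructor
  · exact ⟨(Xm - Ym).charpoly, by rw [← hchar A, hsubA, charpoly_fromBlocks_symm, hXY]⟩
  · exact ⟨((D - Xm) - (-Ym)).charpoly,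
      by rw [← hchar L, hsubL, charpoly_fromBlocks_symm, hXY']⟩
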